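/- Let Q be a nearest-neighbor transition matrix on a finite metric measure graph (G, d, ν), reversible with respect to ν, with spectral gap γ_Q, and let D = max_{x~y} d(x,y). Let A ⊂ V and B = ∂A ∪ ∂(A_ε^c) ∪ (A_ε∖A). If ν(A)ν(A_ε^c) − 4ν(B)² > 0, then γ_Q ≤ (D²/(2ε²)) · ν(B) / (ν(A_ε^c)ν(A) − 4ν(B)²). -/

import Mathlib

open scoped Classical

/-- Discrete conductance-type bound (Lemma `discrete-conductance-bound`): for a
nearest-neighbor transition matrix `Q` on a finite metric measure graph, reversible
w.r.t. `ν`, with spectral gap `γ` and maximal nearest-neighbor edge distance `D`,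
if `B = ∂A ∪ ∂(A_ε^c) ∪ (A_ε \ A)` and `ν(A) ν(A_ε^c) − 4 ν(B)² > 0`, then
`γ ≤ (D² / (2ε²)) ν(B) / (ν(A_ε^c) ν(A) − 4 ν(B)²)`. -/
theorem statement6 {V : Type*} [Fintype V] [MetricSpace V] (G : SimpleGraph V)
    (ν : V → ℝ) (Q : V → V → ℝ) (γ D ε : ℝ)
    (hν0 : ∀ x, 0 ≤ ν x) (hν1 : ∑ x, ν x = 1)
    (hQ0 : ∀ x y, 0 ≤ Q x y) (hQ1 : ∀ x, ∑ y, Q x y = 1)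
    (hrev : ∀ x y, ν x * Q x y = ν y * Q y x)
    (hnn : ∀ x y, Q x y ≠ 0 → G.Adj x y ∨ x = y)
    (hD : ∀ x y, G.Adj x y → dist x y ≤ D)
    (hγ : ∀ f : V → ℝ,
      (∑ x, (f x) ^ 2 * ν x) - (∑ x, f x * ν x) ^ 2 ≠ 0 →
      γ ≤ ((1 / 2) * ∑ x, ∑ y, (f x - f y) ^ 2 * Q x y * ν x) /
          ((∑ x, (f x) ^ 2 * ν x) - (∑ x, f x * ν x) ^ 2))
    (hε : 0 < ε) (A : Set V) :
    let m : Set V → ℝ := fun S => ∑ x, if x ∈ S then ν x else 0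
    let Aε : Set V := {x | Metric.infDist x A ≤ ε}
    let B : Set V :=
      {x | x ∈ A ∧ ∃ y, G.Adj x y ∧ y ∉ A} ∪
      {x | x ∈ Aεᶜ ∧ ∃ y, G.Adj x y ∧ y ∉ Aεᶜ} ∪ (Aε \ A)
    0 < m A * m Aεᶜ - 4 * (m B) ^ 2 →
      γ ≤ D ^ 2 / (2 * ε ^ 2) * (m B / (m Aεᶜ * m A - 4 * (m B) ^ 2)) := by
  intro m Aε B hpos
  have hm : ∀ S : Set V, m S = ∑ x, if x ∈ S then ν x else 0 := fun _ => rfl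
  set f : V → ℝ := fun x => max 0 (1 - Metric.infDist x A / ε) with hfdef
  -- values on A and Aεᶜ
  have hfA : ∀ x, x ∈ A → f x = 1 := by
    intro x hx
    simp [hfdef, Metric.infDist_zero_of_mem hx]
  have hAsub : A ⊆ Aε := by
    intro x hx
    show Metric.infDist x A ≤ ε
    rw [Metric.infDist_zero_of_mem hx]; exact hε.le
  have hfC : ∀ x, x ∈ Aεᶜ → f x = 0 := by
    intro x hx
    have hx' : ε < Metric.infDist x A := by
      simpa [Aε, not_le] using hx
    have h1 : 1 - Metric.infDist x A / ε ≤ 0 := by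
      have : 1 ≤ Metric.infDist x A / ε := (one_le_div hε).2 hx'.le
      linarith
    simp [hfdef, max_eq_left h1]
  -- Lipschitz bound on adjacent pairs
  have hlip : ∀ x y, G.Adj x y → (f x - f y) ^ 2 ≤ D ^ 2 / ε ^ 2 := by
    intro x y hxy
    have hd : dist x y ≤ D := hD x y hxy
    have h1 : |f x - f y| ≤ |(1 - Metric.infDist x A / ε) - (1 - Metric.infDist y A / ε)| := by
      simpa [hfdef, max_comm] using
        abs_max_sub_max_le_abs (1 - Metric.infDist x A / ε) (1 - Metric.infDist y A / ε) 0
    have h2 : |(1 - Metric.infDist x A / ε) - (1 - Metric.infDist y A / ε)|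
        = |Metric.infDist y A - Metric.infDist x A| / ε := by
      have he : (1 - Metric.infDist x A / ε) - (1 - Metric.infDist y A / ε)
          = (Metric.infDist y A - Metric.infDist x A) / ε := by
        field_simp
        ring
      rw [he, abs_div, abs_of_pos hε]
    have h3 : |Metric.infDist y A - Metric.infDist x A| ≤ dist x y := by
      rw [abs_sub_le_iff]
      constructor
      · have := Metric.infDist_le_infDist_add_dist (x := y) (y := x) (s := A)
        rw [dist_comm] at this; linarith
      · have := Metric.infDist_le_infDist_add_dist (x := x) (y := y) (s := A)
        linarith
    have h4 : |f x - f y| ≤ D / ε := by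
      calc |f x - f y| ≤ |Metric.infDist y A - Metric.infDist x A| / ε := h2 ▸ h1
        _ ≤ dist x y / ε := by exact div_le_div_of_nonneg_right h3 hε.le
        _ ≤ D / ε := div_le_div_of_nonneg_right hd hε.le
    have h5 := abs_le.1 h4
    calc (f x - f y) ^ 2 ≤ (D / ε) ^ 2 := sq_le_sq' h5.1 h5.2
      _ = D ^ 2 / ε ^ 2 := div_pow D ε 2
  -- nonnegativity of masses
  have hmnn : ∀ S : Set V, 0 ≤ m S := by
    intro S; rw [hm]
    apply Finset.sum_nonneg
    intro x _
    split
    · exact hν0 x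
    · exact le_rfl
  have hdisj : ∀ x, x ∈ A → x ∉ Aεᶜ := fun x hx hc => hc (hAsub hx)
  have hsum1 : m A + m Aεᶜ ≤ 1 := by
    rw [hm, hm, ← Finset.sum_add_distrib, ← hν1]
    apply Finset.sum_le_sum
    intro x _
    by_cases hxA : x ∈ A
    · simp [hxA, hdisj x hxA]
    · by_cases hxC : x ∈ Aεᶜ <;> simp [hxA, hxC, hν0 x]
  -- variance lower bound
  set a : ℝ := ∑ x, f x * ν x with hadef
  have hVarEq : (∑ x, (f x) ^ 2 * ν x) - a ^ 2 = ∑ x, (f x - a) ^ 2 * ν x := by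
    have h1 : ∀ x : V, (f x - a) ^ 2 * ν x
        = (f x) ^ 2 * ν x - 2 * a * (f x * ν x) + a ^ 2 * ν x := by intro x; ring
    rw [Finset.sum_congr rfl fun x _ => h1 x]
    rw [Finset.sum_add_distrib, Finset.sum_sub_distrib, ← Finset.mul_sum, ← Finset.mul_sum,
      hν1, ← hadef]
    ring
  have hVarLB : (1 - a) ^ 2 * m A + a ^ 2 * m Aεᶜ ≤ ∑ x, (f x - a) ^ 2 * ν x := by
    rw [hm, hm, Finset.mul_sum, Finset.mul_sum, ← Finset.sum_add_distrib]
    apply Finset.sum_le_sum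
    intro x _
    by_cases hxA : x ∈ A
    · simp only [hxA, if_pos, hdisj x hxA, if_neg, not_false_iff, mul_zero, add_zero,
        hfA x hxA]
      exact le_rfl
    · by_cases hxC : x ∈ Aεᶜ
      · simp only [hxA, if_neg, not_false_iff, mul_zero, zero_add, hxC, if_pos, hfC x hxC]
        nlinarith [hν0 x]
      · simp only [hxA, hxC, if_neg, not_false_iff, mul_zero, add_zero]
        exact mul_nonneg (sq_nonneg _) (hν0 x)
  have hquad : m A * m Aεᶜ ≤ (1 - a) ^ 2 * m A + a ^ 2 * m Aεᶜ := by
    nlinarith [sq_nonneg ((1 - a) * m A - a * m Aεᶜ), mul_nonneg (hmnn A) (hmnn Aεᶜ),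
      mul_nonneg (mul_nonneg (hmnn A) (hmnn Aεᶜ)) (sub_nonneg.2 hsum1),
      mul_nonneg (hmnn A) (sq_nonneg (1 - a)), mul_nonneg (hmnn Aεᶜ) (sq_nonneg a)]
  have hden : 0 < m Aεᶜ * m A - 4 * m B ^ 2 := by nlinarith [hpos]
  have hVar : m Aεᶜ * m A - 4 * m B ^ 2 ≤ (∑ x, (f x) ^ 2 * ν x) - a ^ 2 := by
    rw [hVarEq]
    nlinarith [sq_nonneg (m B), hVarLB, hquad]
  have hVarpos : 0 < (∑ x, (f x) ^ 2 * ν x) - a ^ 2 := lt_of_lt_of_le hden hVar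
  -- energy upper bound
  have hEnn : ∀ x, (∑ y, (f x - f y) ^ 2 * Q x y * ν x)
      ≤ D ^ 2 / ε ^ 2 * Set.indicator B ν x := by
    intro x
    by_cases hxB : x ∈ B
    · rw [Set.indicator_of_mem hxB]
      calc ∑ y, (f x - f y) ^ 2 * Q x y * ν x
          ≤ ∑ y, D ^ 2 / ε ^ 2 * Q x y * ν x := by
            apply Finset.sum_le_sum
            intro y _
            by_cases hQ : Q x y = 0
            · simp [hQ]
            · rcases hnn x y hQ with hadj | heq
              · have := hlip x y hadj
                have := mul_nonneg (hQ0 x y) (hν0 x)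
                nlinarith
              · subst heq
                simp only [sub_self, ne_eq, OfNat.ofNat_ne_zero, not_false_eq_true,
                  zero_pow, zero_mul]
                exact mul_nonneg (mul_nonneg (div_nonneg (sq_nonneg D) (sq_nonneg ε))
                  (hQ0 x x)) (hν0 x)
        _ = D ^ 2 / ε ^ 2 * ν x := by
            rw [← Finset.sum_mul, ← Finset.mul_sum, hQ1, mul_one]
    · rw [Set.indicator_of_notMem hxB, mul_zero]
      have hxB' : x ∉ ({x | x ∈ A ∧ ∃ y, G.Adj x y ∧ y ∉ A} : Set V) ∧
          x ∉ ({x | x ∈ Aεᶜ ∧ ∃ y, G.Adj x y ∧ y ∉ Aεᶜ} : Set V) ∧ x ∉ Aε \ A := by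
        have : ¬(x ∈ ({x | x ∈ A ∧ ∃ y, G.Adj x y ∧ y ∉ A} : Set V) ∨
            x ∈ ({x | x ∈ Aεᶜ ∧ ∃ y, G.Adj x y ∧ y ∉ Aεᶜ} : Set V) ∨ x ∈ Aε \ A) := by
          intro h
          apply hxB
          rcases h with h | h | h
          · exact Or.inl (Or.inl h)
          · exact Or.inl (Or.inr h)
          · exact Or.inr h
        tauto
      obtain ⟨h1, h2, h3⟩ := hxB'
      have hfeq : ∀ y, G.Adj x y → f x = f y := by
        intro y hadj
        by_cases hxA : x ∈ A
        · have hyA : y ∈ A := by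
            by_contra hyA
            exact h1 ⟨hxA, y, hadj, hyA⟩
          rw [hfA x hxA, hfA y hyA]
        · by_cases hxC : x ∈ Aεᶜ
          · have hyC : y ∈ Aεᶜ := by
              by_contra hyC
              exact h2 ⟨hxC, y, hadj, hyC⟩
            rw [hfC x hxC, hfC y hyC]
          · exact absurd ⟨not_not.1 hxC, hxA⟩ h3
      apply le_of_eq
      apply Finset.sum_eq_zero
      intro y _
      by_cases hQ : Q x y = 0
      · simp [hQ]
      · rcases hnn x y hQ with hadj | heq
        · rw [hfeq y hadj, sub_self]
          ring
        · subst heq; rw [sub_self]; ring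
  have hE : (1 / 2) * ∑ x, ∑ y, (f x - f y) ^ 2 * Q x y * ν x
      ≤ D ^ 2 / (2 * ε ^ 2) * m B := by
    have h1 : ∑ x, ∑ y, (f x - f y) ^ 2 * Q x y * ν x
        ≤ D ^ 2 / ε ^ 2 * m B := by
      have hmB' : m B = ∑ x, Set.indicator B ν x := by
        rw [hm]
        exact Finset.sum_congr rfl fun x _ => by by_cases h : x ∈ B <;> simp [h]
      rw [hmB', Finset.mul_sum]
      exact Finset.sum_le_sum fun x _ => hEnn x
    have hh : D ^ 2 / (2 * ε ^ 2) * m B = (1 / 2) * (D ^ 2 / ε ^ 2 * m B) := by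
      field_simp
    rw [hh]
    linarith
  -- conclude
  have hgam := hγ f (ne_of_gt hVarpos)
  rw [← hadef] at hgam
  have hEnonneg : 0 ≤ (1 / 2) * ∑ x, ∑ y, (f x - f y) ^ 2 * Q x y * ν x := by
    apply mul_nonneg (by norm_num)
    apply Finset.sum_nonneg; intro x _
    apply Finset.sum_nonneg; intro y _
    exact mul_nonneg (mul_nonneg (sq_nonneg _) (hQ0 x y)) (hν0 x)
  have hfinal : ((1 / 2) * ∑ x, ∑ y, (f x - f y) ^ 2 * Q x y * ν x) /
      ((∑ x, (f x) ^ 2 * ν x) - a ^ 2)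
      ≤ (D ^ 2 / (2 * ε ^ 2) * m B) / (m Aεᶜ * m A - 4 * m B ^ 2) := by
    apply div_le_div₀ (le_trans hEnonneg hE) hE hden hVar
  calc γ ≤ _ := hgam
    _ ≤ (D ^ 2 / (2 * ε ^ 2) * m B) / (m Aεᶜ * m A - 4 * m B ^ 2) := hfinal
    _ = D ^ 2 / (2 * ε ^ 2) * (m B / (m Aεᶜ * m A - 4 * m B ^ 2)) := mul_div_assoc _ _ _
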